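/- Let n = 2N with N ≥ 2, h = 1/n, and let z₁, z₂ ∈ ℂ. Set Ã^h = L^h − z₁ I and Ã^{2h} = L^{2h} − z₂ I, assume Ã^{2h} is invertible, and define TG = I − P (Ã^{2h})⁻¹ R Ã^h. Then for every l with 1 ≤ l ≤ N−1, writing λ_{n−l}^h = 4n² cos²(lπ/(2n)) − z₁ and λ_l^{2h} = n² sin²(lπ/n) − z₂, the action on the oscillatory mode is TG w_{n−l}^h = w_{n−l}^h + s_l (λ_{n−l}^h / λ_l^{2h}) (c_l w_l^h − s_l w_{n−l}^h), where c_l = cos²(lπ/(2n)) and s_l = sin²(lπ/(2n)). -/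

import Mathlib

open Real Matrix Complex

/-- The one-dimensional discrete Dirichlet Laplacian on `m` intervals with grid
spacing `δ`, as a complex `(m-1)×(m-1)` matrix: diagonal entries `2/δ²`,
first sub- and superdiagonal entries `-1/δ²`, all other entries zero. -/
noncomputable def dLapC (m : ℕ) (δ : ℝ) : Matrix (Fin (m - 1)) (Fin (m - 1)) ℂ :=
  Matrix.of fun i j =>
    if (i : ℕ) = (j : ℕ) then 2 / (δ : ℂ) ^ 2
    else if (i : ℕ) + 1 = (j : ℕ) ∨ (j : ℕ) + 1 = (i : ℕ) then -(1 / (δ : ℂ) ^ 2)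
    else 0

/-- Fine-grid Fourier mode `w_l^h ∈ ℂ^{n-1}`, `n = 2N`: components `sin (l j π / (2N))`. -/
noncomputable def fineModeC (N l : ℕ) : Fin (2 * N - 1) → ℂ :=
  fun j => (Real.sin (l * ((j : ℕ) + 1) * Real.pi / (2 * N)) : ℂ)

/-- Full-weighting restriction `R`, the `(N-1)×(2N-1)` matrix with
`R_{i,2i-1} = R_{i,2i+1} = 1/4`, `R_{i,2i} = 1/2`. -/
noncomputable def fullWeightingC (N : ℕ) : Matrix (Fin (N - 1)) (Fin (2 * N - 1)) ℂ :=
  Matrix.of fun i j =>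
    if (j : ℕ) + 1 = 2 * ((i : ℕ) + 1) then 1 / 2
    else if (j : ℕ) + 2 = 2 * ((i : ℕ) + 1) ∨ (j : ℕ) = 2 * ((i : ℕ) + 1) then 1 / 4
    else 0

/-- Linear interpolation `P`, the `(2N-1)×(N-1)` matrix with `P_{2i,i} = 1`,
`P_{2i-1,i} = P_{2i+1,i} = 1/2`. -/
noncomputable def linInterpC (N : ℕ) : Matrix (Fin (2 * N - 1)) (Fin (N - 1)) ℂ :=
  Matrix.of fun j i =>
    if (j : ℕ) + 1 = 2 * ((i : ℕ) + 1) then 1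
    else if (j : ℕ) + 2 = 2 * ((i : ℕ) + 1) ∨ (j : ℕ) = 2 * ((i : ℕ) + 1) then 1 / 2
    else 0

lemma sum_three (d c₁ c₂ c₃ : ℕ) (v₁ v₂ v₃ : ℂ) (g : ℕ → ℂ)
    (hg : ∀ j, j < d → g j = (if j = c₁ then v₁ else 0) + (if j = c₂ then v₂ else 0)
      + (if j = c₃ then v₃ else 0))
    (h₁ : d ≤ c₁ → v₁ = 0) (h₂ : d ≤ c₂ → v₂ = 0) (h₃ : d ≤ c₃ → v₃ = 0) :
    ∑ j ∈ Finset.range d, g j = v₁ + v₂ + v₃ := by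
  rw [Finset.sum_congr rfl (fun j hj => hg j (Finset.mem_range.mp hj))]
  rw [Finset.sum_add_distrib, Finset.sum_add_distrib,
    Finset.sum_ite_eq' (Finset.range d) c₁ (fun _ => v₁),
    Finset.sum_ite_eq' (Finset.range d) c₂ (fun _ => v₂),
    Finset.sum_ite_eq' (Finset.range d) c₃ (fun _ => v₃)]
  simp only [Finset.mem_range]
  have e1 : (if c₁ < d then v₁ else 0) = v₁ := by
    split_ifs with hc; exacts [rfl, (h₁ (le_of_not_gt hc)).symm]
  have e2 : (if c₂ < d then v₂ else 0) = v₂ := by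
    split_ifs with hc; exacts [rfl, (h₂ (le_of_not_gt hc)).symm]
  have e3 : (if c₃ < d then v₃ else 0) = v₃ := by
    split_ifs with hc; exacts [rfl, (h₃ (le_of_not_gt hc)).symm]
  rw [e1, e2, e3]

lemma trig1 (x y : ℝ) :
    2 * Real.sin x - Real.sin (x - y) - Real.sin (x + y) = 4 * Real.sin x * Real.sin (y/2)^2 := by
  have h2 : Real.cos y = 1 - 2 * Real.sin (y/2)^2 := by
    have h := Real.cos_two_mul (y/2)
    have e : 2*(y/2) = y := by ring
    rw [e] at h
    nlinarith [Real.sin_sq_add_cos_sq (y/2)]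
  rw [Real.sin_sub, Real.sin_add, h2]; ring

lemma trig2 (x y : ℝ) :
    2 * Real.sin x + Real.sin (x - y) + Real.sin (x + y) = 4 * Real.sin x * Real.cos (y/2)^2 := by
  have h2 : Real.cos y = 2 * Real.cos (y/2)^2 - 1 := by
    have h := Real.cos_two_mul (y/2)
    have e : 2*(y/2) = y := by ring
    rw [e] at h; linarith
  rw [Real.sin_sub, Real.sin_add, h2]; ring

lemma trig3 (x y : ℝ) :
    Real.sin x + Real.sin y = 2 * Real.sin ((x+y)/2) * Real.cos ((x-y)/2) := by
  have h1 := Real.sin_add ((x+y)/2) ((x-y)/2)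
  have h2 := Real.sin_sub ((x+y)/2) ((x-y)/2)
  have e1 : (x+y)/2 + (x-y)/2 = x := by ring
  have e2 : (x+y)/2 - (x-y)/2 = y := by ring
  rw [e1] at h1; rw [e2] at h2; linarith

lemma dLap_mulVec (m : ℕ) (δ : ℝ) (W : ℕ → ℂ) (hW0 : W 0 = 0) (hWm : W m = 0)
    (i : Fin (m - 1)) :
    (dLapC m δ).mulVec (fun j => W ((j : ℕ) + 1)) i
      = (2 * W ((i : ℕ) + 1) - W (i : ℕ) - W ((i : ℕ) + 2)) / (δ : ℂ) ^ 2 := by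
  have hi := i.isLt
  simp only [Matrix.mulVec, dotProduct, dLapC, Matrix.of_apply]
  rw [Fin.sum_univ_eq_sum_range (fun j =>
    (if (i : ℕ) = j then 2 / (δ : ℂ) ^ 2
      else if (i : ℕ) + 1 = j ∨ j + 1 = (i : ℕ) then -(1 / (δ : ℂ) ^ 2) else 0) * W (j + 1))]
  have hg : ∀ j, j < m - 1 →
      (if (i : ℕ) = j then 2 / (δ : ℂ) ^ 2
        else if (i : ℕ) + 1 = j ∨ j + 1 = (i : ℕ) then -(1 / (δ : ℂ) ^ 2) else 0) * W (j + 1)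
      = (if j = (i : ℕ) then 2 / (δ : ℂ) ^ 2 * W ((i : ℕ) + 1) else 0)
        + (if j = (i : ℕ) + 1 then -(1 / (δ : ℂ) ^ 2) * W ((i : ℕ) + 2) else 0)
        + (if j = (i : ℕ) - 1 then -(1 / (δ : ℂ) ^ 2) * W (i : ℕ) else 0) := by
    intro j hj
    rcases Nat.eq_zero_or_pos (i : ℕ) with h0 | h0
    · split_ifs with a1 a2 a3 a4 a5 a6 a7 a8 a9 <;>
        first
          | omega
          | (rw [show j + 1 = (i : ℕ) + 1 by omega, show (i : ℕ) = 0 from h0] at *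
             simp [hW0]; try ring)
          | (rw [show j + 1 = (i : ℕ) + 2 by omega]; ring)
          | ring
    · split_ifs with a1 a2 a3 a4 a5 a6 a7 a8 a9 <;>
        first
          | omega
          | (rw [show j + 1 = (i : ℕ) + 1 by omega]; ring)
          | (rw [show j + 1 = (i : ℕ) + 2 by omega]; ring)
          | (rw [show j + 1 = (i : ℕ) by omega]; ring)
          | ring
  have h1 : m - 1 ≤ (i : ℕ) → 2 / (δ : ℂ) ^ 2 * W ((i : ℕ) + 1) = 0 := by intro hle; omega
  have h2 : m - 1 ≤ (i : ℕ) + 1 → -(1 / (δ : ℂ) ^ 2) * W ((i : ℕ) + 2) = 0 := by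
    intro hle; rw [show (i : ℕ) + 2 = m by omega, hWm, mul_zero]
  have h3 : m - 1 ≤ (i : ℕ) - 1 → -(1 / (δ : ℂ) ^ 2) * W (i : ℕ) = 0 := by intro hle; omega
  rw [sum_three (m - 1) (i : ℕ) ((i : ℕ) + 1) ((i : ℕ) - 1)
    (2 / (δ : ℂ) ^ 2 * W ((i : ℕ) + 1)) (-(1 / (δ : ℂ) ^ 2) * W ((i : ℕ) + 2))
    (-(1 / (δ : ℂ) ^ 2) * W (i : ℕ)) _ hg h1 h2 h3]
  ring

lemma fw_mulVec (N : ℕ) (hN : 2 ≤ N) (W : ℕ → ℂ) (i : Fin (N - 1)) :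
    (fullWeightingC N).mulVec (fun j => W ((j : ℕ) + 1)) i
      = (W (2 * (i : ℕ) + 1) + 2 * W (2 * (i : ℕ) + 2) + W (2 * (i : ℕ) + 3)) / 4 := by
  have hi := i.isLt
  simp only [Matrix.mulVec, dotProduct, fullWeightingC, Matrix.of_apply]
  rw [Fin.sum_univ_eq_sum_range (fun j =>
    (if j + 1 = 2 * ((i : ℕ) + 1) then (1 : ℂ) / 2
      else if j + 2 = 2 * ((i : ℕ) + 1) ∨ j = 2 * ((i : ℕ) + 1) then 1 / 4 else 0) * W (j + 1))]
  have hg : ∀ j, j < 2 * N - 1 →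
      (if j + 1 = 2 * ((i : ℕ) + 1) then (1 : ℂ) / 2
        else if j + 2 = 2 * ((i : ℕ) + 1) ∨ j = 2 * ((i : ℕ) + 1) then 1 / 4 else 0) * W (j + 1)
      = (if j = 2 * (i : ℕ) then 1 / 4 * W (2 * (i : ℕ) + 1) else 0)
        + (if j = 2 * (i : ℕ) + 1 then 1 / 2 * W (2 * (i : ℕ) + 2) else 0)
        + (if j = 2 * (i : ℕ) + 2 then 1 / 4 * W (2 * (i : ℕ) + 3) else 0) := by
    intro j hj
    split_ifs with a1 a2 a3 a4 a5 a6 a7 a8 a9 <;>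
      first
        | omega
        | (rw [show j + 1 = 2 * (i : ℕ) + 1 by omega]; ring)
        | (rw [show j + 1 = 2 * (i : ℕ) + 2 by omega]; ring)
        | (rw [show j + 1 = 2 * (i : ℕ) + 3 by omega]; ring)
        | ring
  rw [sum_three (2 * N - 1) (2 * (i : ℕ)) (2 * (i : ℕ) + 1) (2 * (i : ℕ) + 2)
    (1 / 4 * W (2 * (i : ℕ) + 1)) (1 / 2 * W (2 * (i : ℕ) + 2)) (1 / 4 * W (2 * (i : ℕ) + 3))
    _ hg (by intro hle; omega) (by intro hle; omega) (by intro hle; omega)]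
  ring

lemma li_mulVec_even (N : ℕ) (U : ℕ → ℂ) (j : Fin (2 * N - 1)) (k : ℕ)
    (hk : (j : ℕ) + 1 = 2 * k) :
    (linInterpC N).mulVec (fun i => U ((i : ℕ) + 1)) j = U k := by
  have hj := j.isLt
  simp only [Matrix.mulVec, dotProduct, linInterpC, Matrix.of_apply]
  rw [Fin.sum_univ_eq_sum_range (fun i =>
    (if (j : ℕ) + 1 = 2 * (i + 1) then (1 : ℂ)
      else if (j : ℕ) + 2 = 2 * (i + 1) ∨ (j : ℕ) = 2 * (i + 1) then 1 / 2 else 0) * U (i + 1))]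
  have hg : ∀ i, i < N - 1 →
      (if (j : ℕ) + 1 = 2 * (i + 1) then (1 : ℂ)
        else if (j : ℕ) + 2 = 2 * (i + 1) ∨ (j : ℕ) = 2 * (i + 1) then 1 / 2 else 0) * U (i + 1)
      = (if i = k - 1 then U k else 0) + (if i = k - 1 then 0 else 0)
        + (if i = k - 1 then 0 else 0) := by
    intro i hi
    split_ifs with a1 a2 a3 <;>
      first
        | omega
        | (rw [show i + 1 = k by omega]; ring)
        | ring
  rw [sum_three (N - 1) (k - 1) (k - 1) (k - 1) (U k) 0 0 _ hg
    (by intro hle; omega) (fun _ => rfl) (fun _ => rfl)]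
  ring

lemma li_mulVec_odd (N : ℕ) (U : ℕ → ℂ) (hU0 : U 0 = 0) (hUN : U N = 0)
    (j : Fin (2 * N - 1)) (k : ℕ) (hk : (j : ℕ) + 1 = 2 * k + 1) :
    (linInterpC N).mulVec (fun i => U ((i : ℕ) + 1)) j = (U k + U (k + 1)) / 2 := by
  have hj := j.isLt
  simp only [Matrix.mulVec, dotProduct, linInterpC, Matrix.of_apply]
  rw [Fin.sum_univ_eq_sum_range (fun i =>
    (if (j : ℕ) + 1 = 2 * (i + 1) then (1 : ℂ)
      else if (j : ℕ) + 2 = 2 * (i + 1) ∨ (j : ℕ) = 2 * (i + 1) then 1 / 2 else 0) * U (i + 1))]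
  have hg : ∀ i, i < N - 1 →
      (if (j : ℕ) + 1 = 2 * (i + 1) then (1 : ℂ)
        else if (j : ℕ) + 2 = 2 * (i + 1) ∨ (j : ℕ) = 2 * (i + 1) then 1 / 2 else 0) * U (i + 1)
      = (if i = k then 1 / 2 * U (k + 1) else 0) + (if i = k - 1 then 1 / 2 * U k else 0)
        + (if i = k - 1 then 0 else 0) := by
    intro i hi
    rcases Nat.eq_zero_or_pos k with h0 | h0
    · subst h0
      split_ifs with a1 a2 a3 a4 a5 <;>
        first
          | omega
          | (rw [show i + 1 = 0 + 1 by omega]; simp [hU0]; try ring)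
          | simp [hU0]
          | ring
    · split_ifs with a1 a2 a3 a4 a5 <;>
        first
          | omega
          | (rw [show i + 1 = k + 1 by omega]; ring)
          | (rw [show i + 1 = k by omega]; ring)
          | ring
  have h1 : N - 1 ≤ k → 1 / 2 * U (k + 1) = 0 := by
    intro hle; rw [show k + 1 = N by omega, hUN, mul_zero]
  have h2 : N - 1 ≤ k - 1 → 1 / 2 * U k = 0 := by
    intro hle
    rcases Nat.eq_zero_or_pos k with h0 | h0
    · rw [h0, hU0, mul_zero]
    · exfalso; omega
  rw [sum_three (N - 1) k (k - 1) (k - 1) (1 / 2 * U (k + 1)) (1 / 2 * U k) 0 _ hg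
    h1 h2 (fun _ => rfl)]
  ring

set_option maxHeartbeats 2000000 in
/-- action of the two-grid correction operator
`TG = I − P (Ã^{2h})⁻¹ R Ã^h` (with `Ã^h = L^h − z₁ I`, `Ã^{2h} = L^{2h} − z₂ I`,
`Ã^{2h}` invertible) on an oscillatory fine-grid mode `w_{n−l}^h`, `1 ≤ l ≤ N−1`:
`TG w_{n−l}^h = w_{n−l}^h + s_l (λ_{n−l}^h / λ_l^{2h}) (c_l w_l^h − s_l w_{n−l}^h)`. -/
theorem twoGrid_oscillatory_mode (N : ℕ) (hN : 2 ≤ N) (h : ℝ) (hh : h = 1 / (2 * N))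
    (z₁ z₂ : ℂ)
    (hinv : IsUnit (dLapC N (2 * h) - z₂ • (1 : Matrix (Fin (N - 1)) (Fin (N - 1)) ℂ)).det) :
    ∀ l : ℕ, 1 ≤ l → l ≤ N - 1 →
      (1 - linInterpC N * (dLapC N (2 * h) - z₂ • 1)⁻¹ * fullWeightingC N
            * (dLapC (2 * N) h - z₁ • 1)).mulVec (fineModeC N (2 * N - l))
        = fineModeC N (2 * N - l)
          + ((Real.sin (l * Real.pi / (2 * (2 * N))) : ℂ) ^ 2
              * ((4 * ((2 * N : ℕ) : ℂ) ^ 2 * (Real.cos (l * Real.pi / (2 * (2 * N))) : ℂ) ^ 2 - z₁)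
                / (((2 * N : ℕ) : ℂ) ^ 2 * (Real.sin (l * Real.pi / (2 * N)) : ℂ) ^ 2 - z₂)))
            • ((Real.cos (l * Real.pi / (2 * (2 * N))) : ℂ) ^ 2 • fineModeC N l
                - (Real.sin (l * Real.pi / (2 * (2 * N))) : ℂ) ^ 2 • fineModeC N (2 * N - l)) := by
  intro l hl1 hl2
  have hNR : (0:ℝ) < (N:ℝ) := by exact_mod_cast (by omega : 0 < N)
  have hNR' : (N:ℝ) ≠ 0 := ne_of_gt hNR
  have hlN : l ≤ 2 * N := by omega
  have hMcast : (((2 * N - l : ℕ)) : ℝ) = 2 * (N:ℝ) - (l:ℝ) := by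
    rw [Nat.cast_sub hlN]; push_cast; ring
  set θ : ℝ := (l:ℝ) * Real.pi / (2 * (2 * (N:ℝ))) with hθ
  set φ : ℝ := (l:ℝ) * Real.pi / (2 * (N:ℝ)) with hφ
  set Wf : ℕ → ℂ := fun k => ((Real.sin (((2 * N - l : ℕ):ℝ) * (k:ℝ) * Real.pi / (2*(N:ℝ))) : ℝ) : ℂ) with hWfdef
  set Wl : ℕ → ℂ := fun k => ((Real.sin ((l:ℝ) * (k:ℝ) * Real.pi / (2*(N:ℝ))) : ℝ) : ℂ) with hWldef
  set Uc : ℕ → ℂ := fun k => ((Real.sin ((l:ℝ) * (k:ℝ) * Real.pi / (N:ℝ)) : ℝ) : ℂ) with hUcdef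
  have hfM : fineModeC N (2 * N - l) = fun j : Fin (2*N-1) => Wf ((j:ℕ)+1) := by
    funext j; simp only [fineModeC, hWfdef]; congr 2; push_cast; ring
  have hfl : fineModeC N l = fun j : Fin (2*N-1) => Wl ((j:ℕ)+1) := by
    funext j; simp only [fineModeC, hWldef]; congr 2; push_cast; ring
  have hWf0 : Wf 0 = 0 := by simp [hWfdef]
  have hWfn : Wf (2 * N) = 0 := by
    simp only [hWfdef]
    rw [show (((2 * N - l : ℕ)):ℝ) * (((2 * N : ℕ)):ℝ) * Real.pi / (2*(N:ℝ))
        = ((2 * N - l : ℕ):ℝ) * Real.pi by push_cast; field_simp]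
    rw [Real.sin_nat_mul_pi]; simp
  have hUc0 : Uc 0 = 0 := by simp [hUcdef]
  have hUcN : Uc N = 0 := by
    simp only [hUcdef]
    rw [show (l:ℝ) * ((N:ℕ):ℝ) * Real.pi / (N:ℝ) = (l:ℝ) * Real.pi by field_simp]
    rw [Real.sin_nat_mul_pi]; simp
  set U : Fin (N-1) → ℂ := fun i => Uc ((i:ℕ)+1) with hUdef
  have hy2 : (((2 * N - l : ℕ)):ℝ) * Real.pi / (2*(N:ℝ)) / 2 = Real.pi/2 - θ := by
    rw [hMcast, hθ]; field_simp
  -- H1 : fine-grid eigenvalue relation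
  have H1 : (dLapC (2*N) h - z₁ • 1).mulVec (fineModeC N (2 * N - l))
      = (4 * ((2 * N : ℕ) : ℂ) ^ 2 * (Real.cos θ : ℂ) ^ 2 - z₁) • fineModeC N (2 * N - l) := by
    funext i
    rw [Matrix.sub_mulVec, Matrix.smul_mulVec, Matrix.one_mulVec, hfM]
    have hd := dLap_mulVec (2*N) h Wf hWf0 hWfn i
    simp only [Pi.sub_apply, Pi.smul_apply, smul_eq_mul]
    rw [hd]
    have core : (2 * Wf ((i:ℕ) + 1) - Wf (i:ℕ) - Wf ((i:ℕ) + 2)) / ((h:ℝ):ℂ) ^ 2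
        = (4 * ((2 * N : ℕ) : ℂ) ^ 2 * (Real.cos θ : ℂ) ^ 2) * Wf ((i:ℕ) + 1) := by
      have hreal : (2 * Real.sin (((2*N-l:ℕ):ℝ) * (((i:ℕ)+1:ℕ):ℝ) * Real.pi / (2*(N:ℝ)))
            - Real.sin (((2*N-l:ℕ):ℝ) * (((i:ℕ):ℕ):ℝ) * Real.pi / (2*(N:ℝ)))
            - Real.sin (((2*N-l:ℕ):ℝ) * (((i:ℕ)+2:ℕ):ℝ) * Real.pi / (2*(N:ℝ)))) / h ^ 2
          = (4 * ((2*N:ℕ):ℝ) ^ 2 * (Real.cos θ)^2)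
            * Real.sin (((2*N-l:ℕ):ℝ) * (((i:ℕ)+1:ℕ):ℝ) * Real.pi / (2*(N:ℝ))) := by
        set x : ℝ := ((2*N-l:ℕ):ℝ) * (((i:ℕ)+1:ℕ):ℝ) * Real.pi / (2*(N:ℝ)) with hx
        set y : ℝ := ((2*N-l:ℕ):ℝ) * Real.pi / (2*(N:ℝ)) with hyy
        have e0 : ((2*N-l:ℕ):ℝ) * (((i:ℕ):ℕ):ℝ) * Real.pi / (2*(N:ℝ)) = x - y := by
          rw [hx, hyy]; push_cast; ring
        have e2 : ((2*N-l:ℕ):ℝ) * (((i:ℕ)+2:ℕ):ℝ) * Real.pi / (2*(N:ℝ)) = x + y := by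
          rw [hx, hyy]; push_cast; ring
        rw [e0, e2, trig1 x y, hy2, Real.sin_pi_div_two_sub, hh]
        push_cast
        field_simp
      simp only [hWfdef]
      push_cast
      exact_mod_cast congrArg (fun t : ℝ => (t:ℂ)) hreal
    rw [core]
    ring
  -- H2 : restriction of oscillatory mode
  have H2 : (fullWeightingC N).mulVec (fineModeC N (2 * N - l))
      = (-(Real.sin θ : ℂ)^2) • U := by
    funext i
    rw [hfM]
    have hd := fw_mulVec N hN Wf i
    rw [hd]
    simp only [Pi.smul_apply, smul_eq_mul, hUdef]
    have hreal : (Real.sin (((2*N-l:ℕ):ℝ) * ((2*(i:ℕ)+1:ℕ):ℝ) * Real.pi / (2*(N:ℝ)))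
          + 2 * Real.sin (((2*N-l:ℕ):ℝ) * ((2*(i:ℕ)+2:ℕ):ℝ) * Real.pi / (2*(N:ℝ)))
          + Real.sin (((2*N-l:ℕ):ℝ) * ((2*(i:ℕ)+3:ℕ):ℝ) * Real.pi / (2*(N:ℝ)))) / 4
        = -(Real.sin θ)^2 * Real.sin ((l:ℝ) * (((i:ℕ)+1:ℕ):ℝ) * Real.pi / (N:ℝ)) := by
      set x : ℝ := ((2*N-l:ℕ):ℝ) * ((2*(i:ℕ)+2:ℕ):ℝ) * Real.pi / (2*(N:ℝ)) with hx
      set y : ℝ := ((2*N-l:ℕ):ℝ) * Real.pi / (2*(N:ℝ)) with hyy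
      have e0 : ((2*N-l:ℕ):ℝ) * ((2*(i:ℕ)+1:ℕ):ℝ) * Real.pi / (2*(N:ℝ)) = x - y := by
        rw [hx, hyy]; push_cast; ring
      have e2 : ((2*N-l:ℕ):ℝ) * ((2*(i:ℕ)+3:ℕ):ℝ) * Real.pi / (2*(N:ℝ)) = x + y := by
        rw [hx, hyy]; push_cast; ring
      have t2 := trig2 x y
      rw [hy2, Real.cos_pi_div_two_sub] at t2
      have hsx : Real.sin x = -Real.sin ((l:ℝ) * (((i:ℕ)+1:ℕ):ℝ) * Real.pi / (N:ℝ)) := by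
        rw [hx, show ((2*N-l:ℕ):ℝ) * ((2*(i:ℕ)+2:ℕ):ℝ) * Real.pi / (2*(N:ℝ))
            = -((l:ℝ) * (((i:ℕ)+1:ℕ):ℝ) * Real.pi / (N:ℝ)) + (((i:ℕ)+1:ℕ):ℝ) * (2*Real.pi) by
          rw [hMcast]; push_cast; field_simp; ring]
        rw [Real.sin_add_nat_mul_two_pi, Real.sin_neg]
      rw [e0, e2]
      linear_combination t2/4 + (Real.sin θ)^2 * hsx
    simp only [hWfdef, hUcdef]
    push_cast
    exact_mod_cast congrArg (fun t : ℝ => (t:ℂ)) hreal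
  -- H3 : coarse-grid eigenvalue relation
  have H3 : (dLapC N (2*h) - z₂ • 1).mulVec U
      = (((2 * N : ℕ) : ℂ) ^ 2 * (Real.sin φ : ℂ) ^ 2 - z₂) • U := by
    funext i
    rw [Matrix.sub_mulVec, Matrix.smul_mulVec, Matrix.one_mulVec, hUdef]
    have hd := dLap_mulVec N (2*h) Uc hUc0 hUcN i
    simp only [Pi.sub_apply, Pi.smul_apply, smul_eq_mul]
    rw [hd]
    have core : (2 * Uc ((i:ℕ) + 1) - Uc (i:ℕ) - Uc ((i:ℕ) + 2)) / (((2*h:ℝ)):ℂ) ^ 2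
        = (((2 * N : ℕ) : ℂ) ^ 2 * (Real.sin φ : ℂ) ^ 2) * Uc ((i:ℕ) + 1) := by
      have hreal : (2 * Real.sin ((l:ℝ) * (((i:ℕ)+1:ℕ):ℝ) * Real.pi / (N:ℝ))
            - Real.sin ((l:ℝ) * (((i:ℕ):ℕ):ℝ) * Real.pi / (N:ℝ))
            - Real.sin ((l:ℝ) * (((i:ℕ)+2:ℕ):ℝ) * Real.pi / (N:ℝ))) / (2*h) ^ 2
          = (((2*N:ℕ):ℝ) ^ 2 * (Real.sin φ)^2)
            * Real.sin ((l:ℝ) * (((i:ℕ)+1:ℕ):ℝ) * Real.pi / (N:ℝ)) := by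
        set x : ℝ := (l:ℝ) * (((i:ℕ)+1:ℕ):ℝ) * Real.pi / (N:ℝ) with hx
        set y : ℝ := (l:ℝ) * Real.pi / (N:ℝ) with hyy
        have e0 : (l:ℝ) * (((i:ℕ):ℕ):ℝ) * Real.pi / (N:ℝ) = x - y := by
          rw [hx, hyy]; push_cast; ring
        have e2 : (l:ℝ) * (((i:ℕ)+2:ℕ):ℝ) * Real.pi / (N:ℝ) = x + y := by
          rw [hx, hyy]; push_cast; ring
        have ey : y / 2 = φ := by rw [hyy, hφ]; field_simp
        rw [e0, e2, trig1 x y, ey, hh]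
        push_cast
        field_simp
        ring
      simp only [hUcdef]
      push_cast
      have hc := congrArg (fun t : ℝ => (t:ℂ)) hreal
      push_cast at hc
      exact hc
    rw [core]
    ring
  -- the coarse eigenvalue is nonzero
  have hU0ne : U ⟨0, by omega⟩ ≠ 0 := by
    simp only [hUdef, hUcdef]
    have hpos : 0 < Real.sin ((l:ℝ) * ((0+1:ℕ):ℝ) * Real.pi / (N:ℝ)) := by
      apply Real.sin_pos_of_pos_of_lt_pi
      · have hl0 : (0:ℝ) < (l:ℝ) := by exact_mod_cast hl1
        positivity
      · rw [div_lt_iff₀ hNR]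
        have hlt : (l:ℝ) < (N:ℝ) := by exact_mod_cast (by omega : l < N)
        have hc : ((0+1:ℕ):ℝ) = 1 := by norm_num
        rw [hc]
        nlinarith [Real.pi_pos]
    exact_mod_cast ne_of_gt hpos
  have hlam2 : (((2 * N : ℕ) : ℂ) ^ 2 * (Real.sin φ : ℂ) ^ 2 - z₂) ≠ 0 := by
    intro h0
    have e1 : (dLapC N (2*h) - z₂ • 1)⁻¹.mulVec ((dLapC N (2*h) - z₂ • 1).mulVec U) = U := by
      rw [Matrix.mulVec_mulVec, Matrix.nonsing_inv_mul _ hinv, Matrix.one_mulVec]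
    rw [H3, h0, zero_smul, Matrix.mulVec_zero] at e1
    exact hU0ne (by rw [← e1]; rfl)
  -- H4 : inverse action on the coarse mode
  have H4 : (dLapC N (2*h) - z₂ • 1)⁻¹.mulVec U
      = (((2 * N : ℕ) : ℂ) ^ 2 * (Real.sin φ : ℂ) ^ 2 - z₂)⁻¹ • U := by
    have e1 : (dLapC N (2*h) - z₂ • 1)⁻¹.mulVec ((dLapC N (2*h) - z₂ • 1).mulVec U) = U := by
      rw [Matrix.mulVec_mulVec, Matrix.nonsing_inv_mul _ hinv, Matrix.one_mulVec]
    rw [H3, Matrix.mulVec_smul] at e1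
    calc (dLapC N (2*h) - z₂ • 1)⁻¹.mulVec U
        = (((2 * N : ℕ) : ℂ) ^ 2 * (Real.sin φ : ℂ) ^ 2 - z₂)⁻¹
          • ((((2 * N : ℕ) : ℂ) ^ 2 * (Real.sin φ : ℂ) ^ 2 - z₂)
            • (dLapC N (2*h) - z₂ • 1)⁻¹.mulVec U) := by
          rw [smul_smul, inv_mul_cancel₀ hlam2, one_smul]
      _ = (((2 * N : ℕ) : ℂ) ^ 2 * (Real.sin φ : ℂ) ^ 2 - z₂)⁻¹ • U := by rw [e1]
  -- H5 : interpolation of the coarse mode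
  have H5 : (linInterpC N).mulVec U
      = (Real.cos θ : ℂ)^2 • fineModeC N l - (Real.sin θ : ℂ)^2 • fineModeC N (2 * N - l) := by
    funext j
    rw [hUdef, hfl, hfM]
    simp only [Pi.sub_apply, Pi.smul_apply, smul_eq_mul]
    rcases Nat.even_or_odd ((j:ℕ)+1) with he | ho
    · obtain ⟨k, hk⟩ := he
      have hk' : (j:ℕ)+1 = 2*k := by omega
      rw [li_mulVec_even N Uc j k hk', hk']
      have hreal : Real.sin ((l:ℝ) * (k:ℝ) * Real.pi / (N:ℝ))
          = (Real.cos θ)^2 * Real.sin ((l:ℝ) * ((2*k:ℕ):ℝ) * Real.pi / (2*(N:ℝ)))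
            - (Real.sin θ)^2 * Real.sin (((2*N-l:ℕ):ℝ) * ((2*k:ℕ):ℝ) * Real.pi / (2*(N:ℝ))) := by
        have eWl : (l:ℝ) * ((2*k:ℕ):ℝ) * Real.pi / (2*(N:ℝ))
            = (l:ℝ) * (k:ℝ) * Real.pi / (N:ℝ) := by push_cast; field_simp
        have eWf : ((2*N-l:ℕ):ℝ) * ((2*k:ℕ):ℝ) * Real.pi / (2*(N:ℝ))
            = -((l:ℝ) * (k:ℝ) * Real.pi / (N:ℝ)) + (k:ℝ) * (2*Real.pi) := by
          rw [hMcast]; push_cast; field_simp; ring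
        rw [eWl, eWf]
        rw [show (k:ℝ) * (2*Real.pi) = ((k:ℕ):ℝ) * (2*Real.pi) by norm_cast]
        rw [Real.sin_add_nat_mul_two_pi, Real.sin_neg]
        linear_combination (-(Real.sin ((l:ℝ) * (k:ℝ) * Real.pi / (N:ℝ)))) * Real.sin_sq_add_cos_sq θ
      simp only [hWfdef, hWldef, hUcdef]
      push_cast
      exact_mod_cast congrArg (fun t : ℝ => (t:ℂ)) hreal
    · obtain ⟨k, hk⟩ := ho
      rw [li_mulVec_odd N Uc hUc0 hUcN j k hk, hk]
      have hreal : (Real.sin ((l:ℝ) * (k:ℝ) * Real.pi / (N:ℝ))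
            + Real.sin ((l:ℝ) * ((k+1:ℕ):ℝ) * Real.pi / (N:ℝ))) / 2
          = (Real.cos θ)^2 * Real.sin ((l:ℝ) * ((2*k+1:ℕ):ℝ) * Real.pi / (2*(N:ℝ)))
            - (Real.sin θ)^2 * Real.sin (((2*N-l:ℕ):ℝ) * ((2*k+1:ℕ):ℝ) * Real.pi / (2*(N:ℝ))) := by
        set X : ℝ := (l:ℝ) * ((2*k+1:ℕ):ℝ) * Real.pi / (2*(N:ℝ)) with hX
        have eWf : ((2*N-l:ℕ):ℝ) * ((2*k+1:ℕ):ℝ) * Real.pi / (2*(N:ℝ))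
            = (Real.pi - X) + ((k:ℕ):ℝ) * (2*Real.pi) := by
          rw [hX, hMcast]; push_cast; field_simp; ring
        rw [eWf, Real.sin_add_nat_mul_two_pi, Real.sin_pi_sub]
        have t3 := trig3 ((l:ℝ) * (k:ℝ) * Real.pi / (N:ℝ)) ((l:ℝ) * ((k+1:ℕ):ℝ) * Real.pi / (N:ℝ))
        rw [show ((l:ℝ) * (k:ℝ) * Real.pi / (N:ℝ) + (l:ℝ) * ((k+1:ℕ):ℝ) * Real.pi / (N:ℝ))/2
            = X by rw [hX]; push_cast; field_simp; ring] at t3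
        rw [show ((l:ℝ) * (k:ℝ) * Real.pi / (N:ℝ) - (l:ℝ) * ((k+1:ℕ):ℝ) * Real.pi / (N:ℝ))/2
            = -φ by rw [hφ]; push_cast; field_simp; ring] at t3
        rw [Real.cos_neg] at t3
        have hcc : (Real.cos θ)^2 - (Real.sin θ)^2 = Real.cos φ := by
          rw [← Real.cos_two_mul']; congr 1; rw [hθ, hφ]; ring
        rw [t3]
        linear_combination (-(Real.sin X)) * hcc
      simp only [hWfdef, hWldef, hUcdef]
      push_cast
      exact_mod_cast congrArg (fun t : ℝ => (t:ℂ)) hreal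
  -- assemble
  rw [Matrix.sub_mulVec, Matrix.one_mulVec,
      ← Matrix.mulVec_mulVec, ← Matrix.mulVec_mulVec, ← Matrix.mulVec_mulVec,
      H1, Matrix.mulVec_smul, H2, Matrix.mulVec_smul, Matrix.mulVec_smul, Matrix.mulVec_smul,
      H4, Matrix.mulVec_smul, Matrix.mulVec_smul, H5]
  funext j
  simp only [Pi.sub_apply, Pi.add_apply, Pi.smul_apply, smul_eq_mul]
  ring
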